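/- If a stochastic choice function p is rationalizable on a menu M by an MSC model that is pairwise comparable on M, then p(·|M) is bounded in a cycle over every ordered pair of distinct alternatives of M. -/

import Mathlib

open Finset

variable {X : Type*} [DecidableEq X]

/-- The menus relevant to an MSC model on `M`: `M` itself and the two-element subsets of `M`. -/
def RelMenu (M N : Finset X) : Prop := N = M ∨ (N ⊆ M ∧ N.card = 2)

/-- `Q` is row-stochastic on `N`: nonnegative entries, rows summing to 1. -/
def RowStochOn (N : Finset X) (Q : X → X → ℝ) : Prop :=
  (∀ i ∈ N, ∀ j ∈ N, 0 ≤ Q i j) ∧ ∀ i ∈ N, ∑ j ∈ N, Q i j = 1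

/-- The axioms of an MSC model on the menu `M`: row-stochasticity on relevant menus,
(A1) prolonged consideration, (A2) pairwise comparability on binary sets, (A3) TR-IIA. -/
def IsMSC (M : Finset X) (q : Finset X → X → X → ℝ) : Prop :=
  (∀ N, RelMenu M N → RowStochOn N (q N)) ∧
  (∀ N, RelMenu M N → ∀ i ∈ N, 0 < q N i i) ∧
  (∀ i ∈ M, ∀ j ∈ M, i ≠ j → q {i, j} i j = 0 → 0 < q {i, j} j i) ∧
  (∀ N, RelMenu M N → ∀ i ∈ N, ∀ j ∈ N, i ≠ j →
    q {i, j} i j * q N j i = q {i, j} j i * q N i j)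

/-- `p` is a stochastic choice function. -/
def IsSCF (p : Finset X → X → ℝ) : Prop :=
  ∀ N : Finset X, N.Nonempty →
    (∀ i, 0 ≤ p N i) ∧ (∀ i, i ∉ N → p N i = 0) ∧ ∑ i ∈ N, p N i = 1

/-- `σ` is a stationary (row) vector of `Q` on `N`, i.e. `σ (I - Q) = 0` on `N`. -/
def StationaryOn (N : Finset X) (Q : X → X → ℝ) (σ : X → ℝ) : Prop :=
  ∀ j ∈ N, ∑ i ∈ N, σ i * Q i j = σ j

/-- The MSC model `q` rationalizes `p` on the menu `M`. -/
def Rationalizes (M : Finset X) (q : Finset X → X → X → ℝ) (p : Finset X → X → ℝ) : Prop :=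
  IsMSC M q ∧ ∀ N, RelMenu M N → StationaryOn N (q N) (p N)

/-- The weighted difference in choice probabilities `δ_ij(M)`. -/
def delta (p : Finset X → X → ℝ) (M : Finset X) (i j : X) : ℝ :=
  p M i * p {i, j} j - p {i, j} i * p M j

/-- The set of ordered pairs of consecutive elements (with wrap-around) of a list. -/
def cyclePairs (c : List X) : List (X × X) := c.zip (c.rotate 1)

/-- `c` is a cycle of distinct alternatives lying in (a subset of) `M`. -/
def IsCycleIn (M : Finset X) (c : List X) : Prop :=
  c.Nodup ∧ 2 ≤ c.length ∧ ∀ x ∈ c, x ∈ M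

/-- All pairs of the cycle have strictly positive `δ`. -/
def PosConsistent (p : Finset X → X → ℝ) (M : Finset X) (c : List X) : Prop :=
  ∀ pr ∈ cyclePairs c, 0 < delta p M pr.1 pr.2

/-- All pairs of the cycle have strictly negative `δ`. -/
def NegConsistent (p : Finset X → X → ℝ) (M : Finset X) (c : List X) : Prop :=
  ∀ pr ∈ cyclePairs c, delta p M pr.1 pr.2 < 0

/-- `p(·|M)` is bounded in a cycle over the pair `(i, j)`. -/
def BoundedInCycle (p : Finset X → X → ℝ) (M : Finset X) (i j : X) : Prop :=
  delta p M i j = 0 ∨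
    ∃ c : List X, IsCycleIn M c ∧ (i, j) ∈ cyclePairs c ∧
      (PosConsistent p M c ∨ NegConsistent p M c)

/-! ### Auxiliary lemmas -/

private lemma chain'_zip_tail {α : Type*} {R : α → α → Prop} :
    ∀ {L : List α}, List.Chain' R L → ∀ pr ∈ L.zip L.tail, R pr.1 pr.2
  | [], _, pr, h => by simp at h
  | [_], _, pr, h => by simp at h
  | a :: b :: t, hc, pr, h => by
    unfold List.Chain' at hc
    rw [List.isChain_cons_cons] at hc
    simp only [List.tail_cons, List.zip_cons_cons, List.mem_cons] at h
    rcases h with rfl | h'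
    · exact hc.1
    · exact chain'_zip_tail hc.2 pr h'

private lemma zip_dropLast_subset {α β : Type*} :
    ∀ (l : List α) (m : List β), l.dropLast.zip m ⊆ l.zip m
  | [], m => by simp
  | [x], m => by simp
  | x :: y :: l, [] => by simp
  | x :: y :: l, z :: m => by
    simp only [List.dropLast_cons₂, List.zip_cons_cons]
    exact List.cons_subset_cons _ (zip_dropLast_subset (y :: l) m)

/-- Flow-decomposition style lemma: an antisymmetric "flow" on `M` satisfying conservation
and having a strictly positive value on the edge `(a, b)` admits a simple positive cycle
through `(a, b)`. -/
private lemma flow_cycle (M : Finset X) (g : X → X → ℝ)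
    (hanti : ∀ i ∈ M, ∀ j ∈ M, g i j = - g j i)
    (hcons : ∀ j ∈ M, ∑ i ∈ M, g i j = 0)
    (a b : X) (ha : a ∈ M) (hb : b ∈ M) (hgab : 0 < g a b) :
    ∃ c : List X, c.Nodup ∧ 2 ≤ c.length ∧ (∀ x ∈ c, x ∈ M) ∧
      (a, b) ∈ cyclePairs c ∧ ∀ pr ∈ cyclePairs c, 0 < g pr.1 pr.2 := by
  classical
  have hab : a ≠ b := by
    rintro rfl
    have := hanti a ha a ha
    linarith
  -- `NP x` : there is a simple positive path from `b` to `x` inside `M`.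
  set NP : X → Prop := fun x => ∃ L : List X, L.head? = some b ∧ L.getLast? = some x ∧
      L.Nodup ∧ (∀ z ∈ L, z ∈ M) ∧ L.Chain' (fun u v => 0 < g u v) with hNPdef
  have hNPb : NP b :=
    ⟨[b], rfl, rfl, List.nodup_singleton b, by simpa using hb, List.isChain_singleton b⟩
  have hclose : ∀ x y, NP x → y ∈ M → 0 < g x y → NP y := by
    rintro x y ⟨L, hh, hl, hnd, hmem, hch⟩ hyM hxy
    by_cases hyL : y ∈ L
    · obtain ⟨s, t, rfl⟩ := List.append_of_mem hyL
      have hsub : List.Sublist (s ++ [y]) (s ++ y :: t) := ((List.nil_sublist t).cons₂ y).append_left s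
      refine ⟨s ++ [y], ?_, List.getLast?_concat, hnd.sublist hsub,
        fun z hz => hmem z (hsub.subset hz), ?_⟩
      · cases s <;> simpa using hh
      · unfold List.Chain' at hch ⊢
        rw [List.isChain_append] at hch ⊢
        refine ⟨hch.1, List.isChain_singleton y, ?_⟩
        simpa using hch.2.2
    · refine ⟨L ++ [y], ?_, List.getLast?_concat, ?_, ?_, ?_⟩
      · simp [hh]
      · simp [List.nodup_append, hnd, hyL]
        exact fun a ha h => hyL (h ▸ ha)
      · intro z hz
        rcases List.mem_append.1 hz with h | h
        · exact hmem z h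
        · rw [List.mem_singleton] at h; subst h; exact hyM
      · unfold List.Chain' at hch ⊢
        rw [List.isChain_append]
        refine ⟨hch, List.isChain_singleton y, ?_⟩
        intro u hu v hv
        rw [List.head?_singleton, Option.mem_some_iff] at hv
        subst hv
        rw [hl, Option.mem_some_iff] at hu
        subst hu
        exact hxy
  set S : Finset X := M.filter NP with hS
  have hSsub : S ⊆ M := Finset.filter_subset _ _
  have hbS : b ∈ S := Finset.mem_filter.2 ⟨hb, hNPb⟩
  have hNPa : NP a := by
    by_contra haNP
    have haS : a ∈ M \ S :=
      Finset.mem_sdiff.2 ⟨ha, fun h => haNP (Finset.mem_filter.1 h).2⟩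
    have hterm : ∀ j ∈ S, ∀ i ∈ M \ S, 0 ≤ g i j := by
      intro j hj i hi
      rcases Finset.mem_sdiff.1 hi with ⟨hiM, hiS⟩
      have hji : ¬ (0 < g j i) := fun hpos =>
        hiS (Finset.mem_filter.2 ⟨hiM, hclose j i (Finset.mem_filter.1 hj).2 hiM hpos⟩)
      have h1 := hanti i hiM j (hSsub hj)
      push_neg at hji
      linarith
    have hpos : 0 < ∑ j ∈ S, ∑ i ∈ M \ S, g i j := by
      apply Finset.sum_pos'
      · intro j hj; exact Finset.sum_nonneg fun i hi => hterm j hj i hi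
      · exact ⟨b, hbS, Finset.sum_pos' (fun i hi => hterm b hbS i hi) ⟨a, haS, hgab⟩⟩
    have hSS : ∑ j ∈ S, ∑ i ∈ S, g i j = 0 := by
      have h1 : ∑ j ∈ S, ∑ i ∈ S, g i j = ∑ j ∈ S, ∑ i ∈ S, -(g j i) :=
        Finset.sum_congr rfl fun j hj => Finset.sum_congr rfl fun i hi =>
          hanti i (hSsub hi) j (hSsub hj)
      have h2 : ∑ j ∈ S, ∑ i ∈ S, g j i = ∑ j ∈ S, ∑ i ∈ S, g i j := Finset.sum_comm
      simp only [Finset.sum_neg_distrib] at h1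
      linarith
    have hzero : ∑ j ∈ S, ∑ i ∈ M \ S, g i j = 0 := by
      have h0 : ∑ j ∈ S, ∑ i ∈ M, g i j = 0 :=
        Finset.sum_eq_zero fun j hj => hcons j (hSsub hj)
      have hsplit : ∑ j ∈ S, (∑ i ∈ M \ S, g i j + ∑ i ∈ S, g i j) = 0 := by
        rw [Finset.sum_congr rfl fun j (_ : j ∈ S) => Finset.sum_sdiff hSsub]
        exact h0
      rw [Finset.sum_add_distrib] at hsplit
      linarith
    linarith
  obtain ⟨L, hh, hl, hnd, hmem, hch⟩ := hNPa
  obtain ⟨t, rfl⟩ : ∃ t, L = b :: t := by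
    cases L with
    | nil => simp at hh
    | cons x t =>
      rw [List.head?_cons, Option.some_inj] at hh
      exact ⟨t, by rw [hh]⟩
  have htne : t ≠ [] := by
    rintro rfl
    rw [List.getLast?_singleton, Option.some_inj] at hl
    exact hab hl.symm
  have hdl : (b :: t).dropLast ++ [a] = b :: t :=
    List.dropLast_append_getLast? a hl
  have hrot : (a :: (b :: t).dropLast).rotate 1 = b :: t := by
    rw [List.rotate_cons_succ, List.rotate_zero, hdl]
  have hcp : cyclePairs (a :: (b :: t).dropLast)
      = (a :: (b :: t).dropLast).zip (b :: t) := by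
    rw [cyclePairs, hrot]
  have hchain2 : List.Chain' (fun u v => 0 < g u v) (a :: b :: t) :=
    List.isChain_cons_cons.2 ⟨hgab, hch⟩
  refine ⟨a :: (b :: t).dropLast, ?_, ?_, ?_, ?_, ?_⟩
  · -- Nodup
    rw [← hdl] at hnd
    rcases List.nodup_append.1 hnd with ⟨h1, _, h3⟩
    exact List.nodup_cons.2 ⟨fun hmem' => h3 a hmem' a (List.mem_singleton_self a) rfl, h1⟩
  · -- length
    have ht1 : 0 < t.length := List.length_pos_iff.2 htne
    simp only [List.length_cons, List.length_dropLast]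
    omega
  · -- membership in M
    intro x hx
    rcases List.mem_cons.1 hx with rfl | hx'
    · exact ha
    · exact hmem x ((List.dropLast_sublist _).subset hx')
  · -- (a, b) is a pair of the cycle
    rw [hcp, List.zip_cons_cons]
    exact List.mem_cons_self
  · -- all pairs are positive
    intro pr hpr
    rw [hcp] at hpr
    have hpr' : pr ∈ ((a :: b :: t).dropLast).zip (b :: t) := by
      rwa [List.dropLast_cons₂]
    have hpr'' : pr ∈ (a :: b :: t).zip (b :: t) :=
      zip_dropLast_subset (a :: b :: t) (b :: t) hpr'
    exact chain'_zip_tail hchain2 pr hpr''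

/-- The key sign equivalence: `δ_ij(M) > 0` iff the net flow `p(i|M) q_ij(M) - p(j|M) q_ji(M)`
is strictly positive. -/
private lemma sign_iff (M : Finset X) (p : Finset X → X → ℝ) (hp : IsSCF p)
    (q : Finset X → X → X → ℝ) (hrat : Rationalizes M q p)
    (hpc : ∀ i ∈ M, ∀ j ∈ M, i ≠ j → q M i j = 0 → 0 < q M j i)
    {i j : X} (hi : i ∈ M) (hj : j ∈ M) (hij : i ≠ j) :
    (0 < delta p M i j ↔ 0 < p M i * q M i j - p M j * q M j i) := by
  obtain ⟨⟨hrs, hA1, hA2, hA3⟩, hstat⟩ := hrat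
  have hPrel : RelMenu M {i, j} :=
    Or.inr ⟨Finset.insert_subset hi (Finset.singleton_subset_iff.2 hj), Finset.card_pair hij⟩
  have hMrel : RelMenu M M := Or.inl rfl
  have hPne : ({i, j} : Finset X).Nonempty := ⟨i, Finset.mem_insert_self _ _⟩
  have hiP : i ∈ ({i, j} : Finset X) := Finset.mem_insert_self _ _
  have hjP : j ∈ ({i, j} : Finset X) := Finset.mem_insert_of_mem (Finset.mem_singleton_self j)
  have pnn := (hp {i, j} hPne).1
  have pMn := (hp M ⟨i, hi⟩).1
  have psum : p {i, j} i + p {i, j} j = 1 := by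
    have := (hp {i, j} hPne).2.2; rwa [Finset.sum_pair hij] at this
  have q2nn := (hrs {i, j} hPrel).1
  have qMnn := (hrs M hMrel).1
  have rowj : q {i, j} j i + q {i, j} j j = 1 := by
    have := (hrs {i, j} hPrel).2 j hjP; rwa [Finset.sum_pair hij] at this
  have statj : p {i, j} i * q {i, j} i j + p {i, j} j * q {i, j} j j = p {i, j} j := by
    have := hstat {i, j} hPrel j hjP; rwa [Finset.sum_pair hij] at this
  have db : p {i, j} i * q {i, j} i j = p {i, j} j * q {i, j} j i := by
    linear_combination statj - p {i, j} j * rowj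
  have hTR : q {i, j} i j * q M j i = q {i, j} j i * q M i j := hA3 M hMrel i hi j hj hij
  have hA2' : q {i, j} i j = 0 → 0 < q {i, j} j i := hA2 i hi j hj hij
  have hA2'' : q {i, j} j i = 0 → 0 < q {i, j} i j := by
    have := hA2 j hj i hi hij.symm
    rwa [Finset.pair_comm j i] at this
  have hid : delta p M i j * (q {i, j} i j * q M j i)
      = p {i, j} j * q {i, j} j i * (p M i * q M i j - p M j * q M j i) := by
    unfold delta
    linear_combination (p M i * p {i, j} j) * hTR - (p M j * q M j i) * db
  constructor
  · intro hδ
    have hδ' : 0 < p M i * p {i, j} j - p {i, j} i * p M j := hδ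
    have h1 : 0 < p M i * p {i, j} j := by nlinarith [mul_nonneg (pnn i) (pMn j)]
    have hpMi : 0 < p M i := by
      rcases mul_pos_iff.1 h1 with ⟨h, _⟩ | ⟨_, h⟩
      · exact h
      · linarith [pnn j]
    have hpPj : 0 < p {i, j} j := by
      rcases mul_pos_iff.1 h1 with ⟨_, h⟩ | ⟨h, _⟩
      · exact h
      · linarith [pMn i]
    have hq2ij : 0 < q {i, j} i j := by
      rcases (q2nn i hiP j hjP).lt_or_eq with h | h
      · exact h
      · exfalso
        have hpos := hA2' h.symm
        rw [← h, mul_zero] at db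
        nlinarith [mul_pos hpPj hpos]
    by_cases hqMji : q M j i = 0
    · have hqMij := hpc j hj i hi hij.symm hqMji
      rw [hqMji, mul_zero, sub_zero]
      exact mul_pos hpMi hqMij
    · have hqMji' : 0 < q M j i := (qMnn j hj i hi).lt_of_ne (Ne.symm hqMji)
      by_contra hng
      push_neg at hng
      nlinarith [hid, mul_pos hδ (mul_pos hq2ij hqMji'),
        mul_nonneg (pnn j) (q2nn j hjP i hiP)]
  · intro hg
    have h1 : 0 < p M i * q M i j := by
      nlinarith [mul_nonneg (pMn j) (qMnn j hj i hi)]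
    have hpMi : 0 < p M i := by
      rcases mul_pos_iff.1 h1 with ⟨h, _⟩ | ⟨_, h⟩
      · exact h
      · linarith [qMnn i hi j hj]
    have hqMij : 0 < q M i j := by
      rcases mul_pos_iff.1 h1 with ⟨_, h⟩ | ⟨h, _⟩
      · exact h
      · linarith [pMn i]
    by_cases hq2ji : q {i, j} j i = 0
    · have hq2ij := hA2'' hq2ji
      have hpPi : p {i, j} i = 0 := by
        rw [hq2ji, mul_zero] at db
        rcases mul_eq_zero.1 db with h | h
        · exact h
        · exact absurd h (ne_of_gt hq2ij)
      have hpPj : p {i, j} j = 1 := by linarith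
      unfold delta
      rw [hpPi, hpPj]
      nlinarith [hpMi]
    · have hq2ji' : 0 < q {i, j} j i := (q2nn j hjP i hiP).lt_of_ne (Ne.symm hq2ji)
      have hpPj : 0 < p {i, j} j := by
        rcases (pnn j).lt_or_eq with h | h
        · exact h
        · exfalso
          have hpPi : p {i, j} i = 1 := by linarith
          have hz : q {i, j} i j = 0 := by
            rw [hpPi, one_mul, ← h, zero_mul] at db
            exact db
          rw [hz, zero_mul] at hTR
          nlinarith [mul_pos hq2ji' hqMij]
      have hq2ij : 0 < q {i, j} i j := by
        rcases (q2nn i hiP j hjP).lt_or_eq with h | h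
        · exact h
        · exfalso
          rw [← h, mul_zero] at db
          nlinarith [mul_pos hpPj hq2ji']
      have hqMji : 0 < q M j i := by
        rcases (qMnn j hj i hi).lt_or_eq with h | h
        · exact h
        · exfalso
          rw [← h, mul_zero] at hTR
          nlinarith [mul_pos hq2ji' hqMij]
      by_contra hnδ
      push_neg at hnδ
      nlinarith [hid, mul_pos (mul_pos hpPj hq2ji') hg, mul_pos hq2ij hqMji]


/-- If `p` is rationalizable on `M` by an MSC model that is pairwise comparable on `M`,
then `p(·|M)` is bounded in a cycle over every ordered pair of distinct alternatives of `M`. -/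
theorem stmt6 (M : Finset X) (hM : M.Nonempty)
    (p : Finset X → X → ℝ) (hp : IsSCF p)
    (q : Finset X → X → X → ℝ) (hrat : Rationalizes M q p)
    (hpc : ∀ i ∈ M, ∀ j ∈ M, i ≠ j → q M i j = 0 → 0 < q M j i) :
    ∀ i ∈ M, ∀ j ∈ M, i ≠ j → BoundedInCycle p M i j := by
  intro i hi j hj hij
  have hdelta_anti : ∀ u v : X, delta p M v u = - delta p M u v := by
    intro u v
    simp only [delta]
    rw [Finset.pair_comm v u]
    ring
  have hconsG : ∀ k ∈ M, ∑ l ∈ M, (p M l * q M l k - p M k * q M k l) = 0 := by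
    intro k hk
    have h1 : ∑ l ∈ M, p M l * q M l k = p M k := hrat.2 M (Or.inl rfl) k hk
    have h2 : ∑ l ∈ M, q M k l = 1 := (hrat.1.1 M (Or.inl rfl)).2 k hk
    rw [Finset.sum_sub_distrib, h1, ← Finset.mul_sum, h2, mul_one, sub_self]
  have hantiG : ∀ u ∈ M, ∀ v ∈ M,
      (p M u * q M u v - p M v * q M v u) = -(p M v * q M v u - p M u * q M u v) :=
    fun u _ v _ => by ring
  rcases lt_trichotomy (delta p M i j) 0 with hneg | h0 | hpos
  · -- negative case: use the reversed flow
    obtain ⟨c, hnd, hlen, hmemM, hpair, hpos'⟩ :=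
      flow_cycle M (fun u v => p M v * q M v u - p M u * q M u v)
        (fun u hu v hv => by ring)
        (fun k hk => by
          have : ∑ l ∈ M, (p M k * q M k l - p M l * q M l k)
              = - ∑ l ∈ M, (p M l * q M l k - p M k * q M k l) := by
            rw [← Finset.sum_neg_distrib]
            exact Finset.sum_congr rfl fun l _ => by ring
          rw [this, hconsG k hk, neg_zero])
        i j hi hj
        (by
          have hδji : 0 < delta p M j i := by rw [hdelta_anti i j]; linarith
          exact (sign_iff M p hp q hrat hpc hj hi hij.symm).1 hδji)
    refine Or.inr ⟨c, ⟨hnd, hlen, hmemM⟩, hpair, Or.inr ?_⟩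
    rintro ⟨u, v⟩ hpr
    have h1 := hpos' (u, v) hpr
    have hprz : (u, v) ∈ c.zip (c.rotate 1) := hpr
    obtain ⟨hmu, hmv⟩ := List.of_mem_zip hprz
    have hu : u ∈ M := hmemM u hmu
    have hv : v ∈ M := hmemM v (List.mem_rotate.1 hmv)
    have huv : u ≠ v := by
      rintro rfl
      simp only [sub_self] at h1
      exact lt_irrefl 0 h1
    have h2 : 0 < delta p M v u :=
      (sign_iff M p hp q hrat hpc hv hu huv.symm).2 h1
    have := hdelta_anti u v
    simpa only [Prod.fst, Prod.snd] using by linarith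
  · exact Or.inl h0
  · -- positive case
    obtain ⟨c, hnd, hlen, hmemM, hpair, hpos'⟩ :=
      flow_cycle M (fun u v => p M u * q M u v - p M v * q M v u)
        (fun u hu v hv => by ring)
        hconsG i j hi hj
        ((sign_iff M p hp q hrat hpc hi hj hij).1 hpos)
    refine Or.inr ⟨c, ⟨hnd, hlen, hmemM⟩, hpair, Or.inl ?_⟩
    rintro ⟨u, v⟩ hpr
    have h1 := hpos' (u, v) hpr
    have hprz : (u, v) ∈ c.zip (c.rotate 1) := hpr
    obtain ⟨hmu, hmv⟩ := List.of_mem_zip hprz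
    have hu : u ∈ M := hmemM u hmu
    have hv : v ∈ M := hmemM v (List.mem_rotate.1 hmv)
    have huv : u ≠ v := by
      rintro rfl
      simp only [sub_self] at h1
      exact lt_irrefl 0 h1
    exact (sign_iff M p hp q hrat hpc hu hv huv).2 h1
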